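/- arXiv:2006.06573 — 3 statements merged into one kernel-verified Lean document; each statement's English description precedes it below -/
import Mathlib

section
/- For the fully connected graph G_data with Gaussian weights w(i,j) = exp(−‖I(i)−I(j)‖²/(2σ²)) on pixel appearance vectors I(i) ∈ ℝ^d, the cut value satisfies cut(A,B|G_data) = (2πσ²)^{d/2} |A| |B| ⟨g_A, g_B⟩, where g_S(c) = (1/|S|) Σ_{i∈S} K_{σ²}(I(i)−c) is the kernel density estimate with Gaussian kernel K_{σ²}(u) = (πσ²)^{−d/2} exp(−‖u‖²/σ²), and ⟨·,·⟩ is the L² inner product on ℝ^d. -/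
open Real MeasureTheory Finset

lemma gauss_integrable_aux (d : ℕ) {b : ℝ} (hb : 0 < b) :
    Integrable (fun c : EuclideanSpace ℝ (Fin d) => Real.exp (-b * ‖c‖^2)) := by
  have h := (GaussianFourier.integrable_cexp_neg_mul_sq_norm_add
    (V := EuclideanSpace ℝ (Fin d)) (b := (b:ℂ)) (by simpa using hb) 0 0).norm
  have h2 : (fun v : EuclideanSpace ℝ (Fin d) =>
      ‖Complex.exp (-(b:ℂ) * (‖v‖:ℂ)^2 + 0 * ((inner ℝ (0 : EuclideanSpace ℝ (Fin d)) v : ℝ) : ℂ))‖)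
      = fun v => Real.exp (-b * ‖v‖^2) := by
    ext v
    rw [Complex.norm_exp]
    push_cast
    simp [← Complex.ofReal_pow]
  rwa [h2] at h

lemma gauss_pair_integral (d : ℕ) {σ : ℝ} (hσ : 0 < σ) (x y : EuclideanSpace ℝ (Fin d)) :
    Integrable (fun c : EuclideanSpace ℝ (Fin d) =>
       Real.exp (-‖x - c‖^2 / σ^2) * Real.exp (-‖y - c‖^2 / σ^2)) ∧
    ∫ c : EuclideanSpace ℝ (Fin d),
       Real.exp (-‖x - c‖^2 / σ^2) * Real.exp (-‖y - c‖^2 / σ^2)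
      = (π * σ^2 / 2) ^ ((d:ℝ)/2) * Real.exp (-‖x - y‖^2 / (2 * σ^2)) := by
  set m : EuclideanSpace ℝ (Fin d) := (2:ℝ)⁻¹ • (x + y) with hm
  have hb : (0:ℝ) < 2 / σ^2 := by positivity
  have hσ2 : (σ:ℝ)^2 ≠ 0 := by positivity
  have hpt : ∀ c : EuclideanSpace ℝ (Fin d),
      Real.exp (-‖x - c‖^2 / σ^2) * Real.exp (-‖y - c‖^2 / σ^2)
      = Real.exp (-‖x - y‖^2 / (2 * σ^2)) * Real.exp (-(2/σ^2) * ‖c - m‖^2) := by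
    intro c
    have hpar := parallelogram_law_with_norm ℝ (x - c) (y - c)
    have h1 : (x - c) + (y - c) = (2:ℝ) • (m - c) := by
      rw [hm]; module
    have h2 : (x - c) - (y - c) = x - y := by abel
    rw [h1, h2, norm_smul] at hpar
    simp only [Real.norm_ofNat] at hpar
    have hkey : ‖x - c‖^2 + ‖y - c‖^2 = ‖x - y‖^2 / 2 + 2 * ‖c - m‖^2 := by
      have : ‖c - m‖ = ‖m - c‖ := by rw [norm_sub_rev]
      rw [this]; nlinarith [hpar]
    rw [← Real.exp_add, ← Real.exp_add]
    congr 1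
    have : -‖x - c‖^2 / σ^2 + -‖y - c‖^2 / σ^2 = -(‖x - c‖^2 + ‖y - c‖^2) / σ^2 := by ring
    rw [this, hkey]
    field_simp
    ring
  constructor
  · rw [funext hpt]
    have : Integrable (fun c : EuclideanSpace ℝ (Fin d) => Real.exp (-(2/σ^2) * ‖c - m‖^2)) :=
      (gauss_integrable_aux d hb).comp_sub_right m
    exact this.const_mul _
  · simp_rw [hpt]
    rw [integral_const_mul]
    have htr : ∫ c : EuclideanSpace ℝ (Fin d), Real.exp (-(2/σ^2) * ‖c - m‖^2)
        = ∫ c : EuclideanSpace ℝ (Fin d), Real.exp (-(2/σ^2) * ‖c‖^2) :=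
      integral_sub_right_eq_self (fun c : EuclideanSpace ℝ (Fin d) =>
        Real.exp (-(2/σ^2) * ‖c‖^2)) m
    rw [htr, GaussianFourier.integral_rexp_neg_mul_sq_norm hb, finrank_euclideanSpace_fin]
    have : π / (2 / σ^2) = π * σ^2 / 2 := by field_simp
    rw [this, mul_comm]

theorem dense_cut_eq_kde_inner (d : ℕ) (V : Type*) [Fintype V] [DecidableEq V]
    (I : V → EuclideanSpace ℝ (Fin d)) (σ : ℝ) (hσ : 0 < σ)
    (A B : Finset V) (hA : A.Nonempty) (hB : B.Nonempty)
    (hdisj : Disjoint A B) (hcover : A ∪ B = Finset.univ)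
    (w : V → V → ℝ) (hw : ∀ i j, w i j = Real.exp (-‖I i - I j‖^2 / (2 * σ^2)))
    (g : Finset V → EuclideanSpace ℝ (Fin d) → ℝ)
    (hg : ∀ S c, g S c = (1 / (S.card : ℝ)) *
        ∑ i ∈ S, (π * σ^2) ^ (-(d:ℝ)/2) * Real.exp (-‖I i - c‖^2 / σ^2)) :
    ∑ i ∈ A, ∑ j ∈ B, w i j =
      (2 * π * σ^2) ^ ((d:ℝ)/2) * (A.card : ℝ) * (B.card : ℝ) *
        ∫ c : EuclideanSpace ℝ (Fin d), g A c * g B c := by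
  set K : ℝ := (π * σ^2) ^ (-(d:ℝ)/2) with hK
  have hπσ : (0:ℝ) < π * σ^2 := by positivity
  -- pointwise expansion of the product of KDEs
  have hexp : ∀ c : EuclideanSpace ℝ (Fin d), g A c * g B c
      = (1 / (A.card : ℝ)) * (1 / (B.card : ℝ)) *
        ∑ i ∈ A, ∑ j ∈ B, (K * K) *
          (Real.exp (-‖I i - c‖^2 / σ^2) * Real.exp (-‖I j - c‖^2 / σ^2)) := by
    intro c
    rw [hg, hg, mul_mul_mul_comm, Finset.sum_mul_sum]
    congr 1
    apply Finset.sum_congr rfl; intro i _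
    apply Finset.sum_congr rfl; intro j _
    ring
  have hint : ∀ i j : V, Integrable (fun c : EuclideanSpace ℝ (Fin d) =>
      (K * K) * (Real.exp (-‖I i - c‖^2 / σ^2) * Real.exp (-‖I j - c‖^2 / σ^2))) :=
    fun i j => ((gauss_pair_integral d hσ (I i) (I j)).1).const_mul _
  have hI : ∫ c : EuclideanSpace ℝ (Fin d), g A c * g B c
      = (1 / (A.card : ℝ)) * (1 / (B.card : ℝ)) *
        ∑ i ∈ A, ∑ j ∈ B, (K * K) * ((π * σ^2 / 2) ^ ((d:ℝ)/2) *
          Real.exp (-‖I i - I j‖^2 / (2 * σ^2))) := by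
    simp_rw [hexp]
    rw [integral_const_mul, integral_finset_sum _
      (fun i _ => (integrable_finset_sum _ (fun j _ => hint i j)))]
    congr 1
    apply Finset.sum_congr rfl; intro i _
    rw [integral_finset_sum _ (fun j _ => hint i j)]
    apply Finset.sum_congr rfl; intro j _
    rw [integral_const_mul, (gauss_pair_integral d hσ (I i) (I j)).2]
  rw [hI]
  -- constants
  have hconst : (2 * π * σ^2) ^ ((d:ℝ)/2) * (K * K) * (π * σ^2 / 2) ^ ((d:ℝ)/2) = 1 := by
    rw [hK, ← Real.rpow_add hπσ]
    have hd2 : -(d:ℝ)/2 + -(d:ℝ)/2 = -(d:ℝ) := by ring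
    rw [hd2]
    rw [show (2 * π * σ^2 : ℝ) = 2 * (π * σ^2) by ring,
      Real.mul_rpow (by norm_num) hπσ.le,
      Real.div_rpow hπσ.le (by norm_num : (0:ℝ) ≤ 2)]
    rw [Real.rpow_neg hπσ.le]
    have h2 : (2:ℝ) ^ ((d:ℝ)/2) ≠ 0 := by positivity
    have hp : (π * σ^2 : ℝ) ^ ((d:ℝ)/2) ≠ 0 := by positivity
    have hnat : (π * σ^2 : ℝ) ^ ((d:ℝ)/2) * (π * σ^2 : ℝ) ^ ((d:ℝ)/2)
        = (π * σ^2 : ℝ) ^ d := by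
      rw [← Real.rpow_natCast (π * σ^2) d, ← Real.rpow_add hπσ]; norm_num
    field_simp
    rw [sq, hnat, Real.rpow_natCast]
  have hcardA : (A.card : ℝ) ≠ 0 := by exact_mod_cast hA.card_pos.ne'
  have hcardB : (B.card : ℝ) ≠ 0 := by exact_mod_cast hB.card_pos.ne'
  rw [Finset.mul_sum, Finset.mul_sum]
  simp_rw [Finset.mul_sum]
  apply Finset.sum_congr rfl; intro i _
  apply Finset.sum_congr rfl; intro j _
  rw [hw]
  have : (2 * π * σ^2) ^ ((d:ℝ)/2) * (A.card : ℝ) * (B.card : ℝ) *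
      (1 / (A.card : ℝ) * (1 / (B.card : ℝ)) *
        (K * K * ((π * σ^2 / 2) ^ ((d:ℝ)/2) * Real.exp (-‖I i - I j‖^2 / (2 * σ^2)))))
      = ((2 * π * σ^2) ^ ((d:ℝ)/2) * (K * K) * (π * σ^2 / 2) ^ ((d:ℝ)/2)) *
        (((A.card : ℝ) * (1 / (A.card : ℝ))) * ((B.card : ℝ) * (1 / (B.card : ℝ)))) *
        Real.exp (-‖I i - I j‖^2 / (2 * σ^2)) := by ring
  rw [this, hconst, mul_one_div_cancel hcardA, mul_one_div_cancel hcardB]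
  norm_num
end

section
/- With Gaussian appearance weights, the volume satisfies vol(S|G_data) = (2πσ²)^{d/2} |S| |V| ⟨g_S, g_V⟩ for any nonempty S ⊆ V. -/
open Real MeasureTheory Finset

lemma gauss_key (d : ℕ) (σ : ℝ) (hσ : 0 < σ) (a b : EuclideanSpace ℝ (Fin d))
    (c : EuclideanSpace ℝ (Fin d)) :
    Real.exp (-‖a - c‖^2 / σ^2) * Real.exp (-‖b - c‖^2 / σ^2)
      = Real.exp (-(2/σ^2) * ‖c - (2:ℝ)⁻¹ • (a + b)‖^2) *
        Real.exp (-‖a - b‖^2 / (2*σ^2)) := by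
  set m : EuclideanSpace ℝ (Fin d) := (2:ℝ)⁻¹ • (a + b) with hm
  rw [← Real.exp_add, ← Real.exp_add]
  congr 1
  have par := parallelogram_law_with_norm ℝ (a - c) (b - c)
  have h1 : a - c + (b - c) = (2:ℝ) • (m - c) := by rw [hm]; module
  have h2 : a - c - (b - c) = a - b := by abel
  rw [h1, h2, norm_smul] at par
  simp only [Real.norm_ofNat] at par
  have hmc : ‖m - c‖ = ‖c - m‖ := norm_sub_rev _ _
  rw [hmc] at par
  have hkey : ‖a - c‖^2 + ‖b - c‖^2 = 2 * ‖c - m‖^2 + ‖a - b‖^2 / 2 := by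
    nlinarith [par]
  have hσ2 : σ^2 ≠ 0 := by positivity
  field_simp
  linear_combination (-2) * hkey

lemma gauss_integrable (d : ℕ) {k : ℝ} (hk : 0 < k) :
    Integrable (fun v : EuclideanSpace ℝ (Fin d) => Real.exp (-k * ‖v‖^2)) := by
  have hC : Integrable (fun v : EuclideanSpace ℝ (Fin d) =>
      Complex.exp (-(k:ℂ) * (‖v‖:ℂ)^2 +
        0 * ((inner ℝ (0 : EuclideanSpace ℝ (Fin d)) v : ℝ) : ℂ))) :=
    GaussianFourier.integrable_cexp_neg_mul_sq_norm_add (by simpa using hk) 0 0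
  refine hC.norm.congr (ae_of_all _ fun v => ?_)
  have h2 : (-(k:ℂ) * (‖v‖:ℂ)^2 + 0 * ((inner ℝ (0 : EuclideanSpace ℝ (Fin d)) v : ℝ) : ℂ))
      = ((-k * ‖v‖^2 : ℝ) : ℂ) := by push_cast; ring
  simp only [h2, Complex.norm_exp, Complex.ofReal_re]

lemma gauss_prod_integrable (d : ℕ) (σ : ℝ) (hσ : 0 < σ)
    (a b : EuclideanSpace ℝ (Fin d)) :
    Integrable (fun c : EuclideanSpace ℝ (Fin d) =>
      Real.exp (-‖a - c‖^2 / σ^2) * Real.exp (-‖b - c‖^2 / σ^2)) := by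
  have hk : (0:ℝ) < 2 / σ^2 := by positivity
  simp_rw [gauss_key d σ hσ a b]
  exact (((gauss_integrable d hk).comp_sub_right ((2:ℝ)⁻¹ • (a + b))).mul_const _)

lemma gauss_prod_integral (d : ℕ) (σ : ℝ) (hσ : 0 < σ)
    (a b : EuclideanSpace ℝ (Fin d)) :
    ∫ c : EuclideanSpace ℝ (Fin d),
      Real.exp (-‖a - c‖^2 / σ^2) * Real.exp (-‖b - c‖^2 / σ^2)
    = (π * σ^2 / 2) ^ ((d:ℝ)/2) * Real.exp (-‖a - b‖^2 / (2*σ^2)) := by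
  have hk : (0:ℝ) < 2 / σ^2 := by positivity
  simp_rw [gauss_key d σ hσ a b]
  rw [integral_mul_const]
  congr 1
  have htrans := integral_sub_right_eq_self
    (μ := (volume : Measure (EuclideanSpace ℝ (Fin d))))
    (fun c : EuclideanSpace ℝ (Fin d) => Real.exp (-(2/σ^2) * ‖c‖^2)) ((2:ℝ)⁻¹ • (a + b))
  rw [htrans, GaussianFourier.integral_rexp_neg_mul_sq_norm hk, finrank_euclideanSpace_fin]
  congr 1
  field_simp

theorem dense_vol_eq_kde_inner (d : ℕ) (V : Type*) [Fintype V] [DecidableEq V]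
    (I : V → EuclideanSpace ℝ (Fin d)) (σ : ℝ) (hσ : 0 < σ)
    (S : Finset V) (hS : S.Nonempty)
    (w : V → V → ℝ) (hw : ∀ i j, w i j = Real.exp (-‖I i - I j‖^2 / (2 * σ^2)))
    (g : Finset V → EuclideanSpace ℝ (Fin d) → ℝ)
    (hg : ∀ T c, g T c = (1 / (T.card : ℝ)) *
        ∑ i ∈ T, (π * σ^2) ^ (-(d:ℝ)/2) * Real.exp (-‖I i - c‖^2 / σ^2)) :
    ∑ i ∈ S, ∑ j ∈ Finset.univ, w i j =
      (2 * π * σ^2) ^ ((d:ℝ)/2) * (S.card : ℝ) * (Fintype.card V : ℝ) *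
        ∫ c : EuclideanSpace ℝ (Fin d), g S c * g Finset.univ c := by
  classical
  have hScard : (0:ℝ) < (S.card : ℝ) := by exact_mod_cast Finset.card_pos.mpr hS
  have hVcard : (0:ℝ) < (Fintype.card V : ℝ) := by
    have : 0 < Fintype.card V := Fintype.card_pos_iff.mpr ⟨hS.choose⟩
    exact_mod_cast this
  set A : ℝ := (π * σ^2) ^ (-(d:ℝ)/2) with hA
  have hint : ∀ c : EuclideanSpace ℝ (Fin d), g S c * g Finset.univ c
      = (1 / (S.card : ℝ)) * (1 / (Fintype.card V : ℝ)) *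
        ∑ i ∈ S, ∑ j ∈ (Finset.univ : Finset V),
          A^2 * (Real.exp (-‖I i - c‖^2 / σ^2) * Real.exp (-‖I j - c‖^2 / σ^2)) := by
    intro c
    rw [hg, hg, Finset.card_univ, mul_mul_mul_comm, Finset.sum_mul_sum]
    congr 1
    apply Finset.sum_congr rfl; intro i _
    apply Finset.sum_congr rfl; intro j _
    ring
  have hintegral : ∫ c : EuclideanSpace ℝ (Fin d), g S c * g Finset.univ c
      = (1 / (S.card : ℝ)) * (1 / (Fintype.card V : ℝ)) *
        ∑ i ∈ S, ∑ j ∈ (Finset.univ : Finset V),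
          A^2 * ((π * σ^2 / 2) ^ ((d:ℝ)/2) * Real.exp (-‖I i - I j‖^2 / (2*σ^2))) := by
    simp_rw [hint]
    rw [integral_const_mul]
    congr 1
    rw [integral_finset_sum]
    · apply Finset.sum_congr rfl; intro i _
      rw [integral_finset_sum]
      · apply Finset.sum_congr rfl; intro j _
        rw [integral_const_mul, gauss_prod_integral d σ hσ]
      · intro j _
        exact ((gauss_prod_integrable d σ hσ (I i) (I j))).const_mul _
    · intro i _
      apply integrable_finset_sum
      intro j _
      exact ((gauss_prod_integrable d σ hσ (I i) (I j))).const_mul _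
  rw [hintegral]
  have hpos : (0:ℝ) < π * σ^2 := by positivity
  have hconst : (2 * π * σ^2) ^ ((d:ℝ)/2) * (A^2 * (π * σ^2 / 2) ^ ((d:ℝ)/2)) = 1 := by
    have e1 : (2 * π * σ^2) ^ ((d:ℝ)/2) * (π * σ^2 / 2) ^ ((d:ℝ)/2)
        = ((π * σ^2)^2 : ℝ) ^ ((d:ℝ)/2) := by
      rw [← Real.mul_rpow (by positivity) (by positivity)]
      congr 1; ring
    have e2 : ((π * σ^2)^2 : ℝ) ^ ((d:ℝ)/2) = (π * σ^2) ^ ((d:ℝ)) := by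
      rw [← Real.rpow_natCast (π * σ^2) 2, ← Real.rpow_mul hpos.le]
      congr 1; ring
    have e3 : A^2 = (π * σ^2) ^ (-(d:ℝ)) := by
      rw [hA, ← Real.rpow_natCast ((π * σ^2) ^ (-(d:ℝ)/2)) 2, ← Real.rpow_mul hpos.le]
      congr 1; ring
    calc (2 * π * σ^2) ^ ((d:ℝ)/2) * (A^2 * (π * σ^2 / 2) ^ ((d:ℝ)/2))
        = ((2 * π * σ^2) ^ ((d:ℝ)/2) * (π * σ^2 / 2) ^ ((d:ℝ)/2)) * A^2 := by ring
      _ = (π * σ^2) ^ ((d:ℝ)) * (π * σ^2) ^ (-(d:ℝ)) := by rw [e1, e2, e3]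
      _ = 1 := by
          rw [← Real.rpow_add hpos]
          norm_num
  set T : ℝ := ∑ i ∈ S, ∑ j ∈ (Finset.univ : Finset V),
      A^2 * ((π * σ^2 / 2) ^ ((d:ℝ)/2) * Real.exp (-‖I i - I j‖^2 / (2*σ^2))) with hT
  have hcol : (2 * π * σ^2) ^ ((d:ℝ)/2) * (S.card : ℝ) * (Fintype.card V : ℝ) *
      ((1 / (S.card : ℝ)) * (1 / (Fintype.card V : ℝ)) * T)
      = (2 * π * σ^2) ^ ((d:ℝ)/2) * T := by
    field_simp
  rw [hcol, hT, Finset.mul_sum]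
  apply Finset.sum_congr rfl; intro i _
  rw [Finset.mul_sum]
  apply Finset.sum_congr rfl; intro j _
  rw [hw]
  symm
  calc (2 * π * σ^2) ^ ((d:ℝ)/2) *
        (A^2 * ((π * σ^2 / 2) ^ ((d:ℝ)/2) * Real.exp (-‖I i - I j‖^2 / (2*σ^2))))
      = ((2 * π * σ^2) ^ ((d:ℝ)/2) * (A^2 * (π * σ^2 / 2) ^ ((d:ℝ)/2))) *
        Real.exp (-‖I i - I j‖^2 / (2*σ^2)) := by ring
    _ = Real.exp (-‖I i - I j‖^2 / (2*σ^2)) := by rw [hconst, one_mul]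
end

section
/- With Gaussian appearance weights, ncut(A,B|G_data) = ⟨g_V, g_V⟩ · ⟨g_A, g_B⟩ / (⟨g_A, g_V⟩ · ⟨g_B, g_V⟩) for any partition (A,B) of V with A, B nonempty. -/
open Real MeasureTheory Finset RealInnerProductSpace

variable {d : ℕ}

local notation "E" => EuclideanSpace ℝ (Fin d)

lemma norm_split (a b x : E) :
    ‖a - x‖^2 + ‖b - x‖^2 = 2 * ‖x - (2:ℝ)⁻¹ • (a + b)‖^2 + ‖a - b‖^2 / 2 := by
  have h := parallelogram_law_with_norm ℝ (a - x) (b - x)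
  have h1 : (a - x) + (b - x) = (2:ℝ) • ((2:ℝ)⁻¹ • (a + b) - x) := by module
  have h2 : (a - x) - (b - x) = a - b := by abel
  rw [h1, h2, norm_smul, norm_sub_rev ((2:ℝ)⁻¹ • (a + b)) x] at h
  simp only [Real.norm_ofNat, mul_pow] at h
  nlinarith [h]

lemma gauss_prod {σ : ℝ} (hσ : 0 < σ) (a b x : E) :
    Real.exp (-‖a - x‖^2 / σ^2) * Real.exp (-‖b - x‖^2 / σ^2) =
      Real.exp (-‖a - b‖^2 / (2 * σ^2)) *
        Real.exp (-(2/σ^2) * ‖x - (2:ℝ)⁻¹ • (a + b)‖^2) := by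
  rw [← Real.exp_add, ← Real.exp_add]
  congr 1
  have h := norm_split a b x
  set p := ‖a - x‖^2; set q := ‖b - x‖^2
  set r := ‖x - (2:ℝ)⁻¹ • (a + b)‖^2; set s := ‖a - b‖^2
  have hs : σ^2 ≠ 0 := by positivity
  field_simp
  linear_combination (-2) * h

lemma gauss_integrable_basic {σ : ℝ} (hσ : 0 < σ) :
    Integrable (fun v : E => Real.exp (-(2/σ^2) * ‖v‖^2)) := by
  have hb : (0:ℝ) < 2 / σ^2 := by positivity
  have hre : (0:ℝ) < (((2/σ^2 : ℝ) : ℂ)).re := by rw [Complex.ofReal_re]; exact hb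
  have hc := (GaussianFourier.integrable_cexp_neg_mul_sq_norm_add (V := E)
    (b := ((2/σ^2 : ℝ) : ℂ)) hre 0 0).norm
  refine hc.congr (Filter.Eventually.of_forall fun v => ?_)
  simp only [Complex.norm_exp]
  congr 1
  simp only [Complex.add_re, Complex.mul_re, Complex.neg_re, Complex.neg_im,
    Complex.zero_re, Complex.zero_im, Complex.ofReal_re, Complex.ofReal_im]
  simp [← Complex.ofReal_pow, Complex.ofReal_re, Complex.ofReal_im]

lemma gauss_integrable_s8 {σ : ℝ} (hσ : 0 < σ) (a b : E) :
    Integrable (fun x : E => Real.exp (-‖a - x‖^2 / σ^2) * Real.exp (-‖b - x‖^2 / σ^2)) := by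
  have h := ((gauss_integrable_basic (d := d) hσ).comp_sub_right
      ((2:ℝ)⁻¹ • (a + b))).const_mul (Real.exp (-‖a - b‖^2 / (2 * σ^2)))
  exact h.congr (Filter.Eventually.of_forall fun x => (gauss_prod hσ a b x).symm)

lemma gauss_integral {σ : ℝ} (hσ : 0 < σ) (a b : E) :
    ∫ x : E, Real.exp (-‖a - x‖^2 / σ^2) * Real.exp (-‖b - x‖^2 / σ^2) =
      (π * σ^2 / 2) ^ ((d:ℝ) / 2) * Real.exp (-‖a - b‖^2 / (2 * σ^2)) := by
  simp_rw [gauss_prod hσ a b]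
  rw [MeasureTheory.integral_const_mul]
  have hb : (0:ℝ) < 2 / σ^2 := by positivity
  have ht : ∫ x : E, Real.exp (-(2/σ^2) * ‖x - (2:ℝ)⁻¹ • (a + b)‖^2) =
      ∫ x : E, Real.exp (-(2/σ^2) * ‖x‖^2) :=
    integral_sub_right_eq_self (fun x : E => Real.exp (-(2/σ^2) * ‖x‖^2)) _
  rw [ht, GaussianFourier.integral_rexp_neg_mul_sq_norm (V := E) hb]
  rw [finrank_euclideanSpace_fin]
  rw [show π / (2 / σ^2) = π * σ^2 / 2 by field_simp]
  ring

set_option maxHeartbeats 1000000 in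
theorem dense_ncut_eq_kde (d : ℕ) (V : Type*) [Fintype V] [DecidableEq V]
    (I : V → EuclideanSpace ℝ (Fin d)) (σ : ℝ) (hσ : 0 < σ)
    (A B : Finset V) (hA : A.Nonempty) (hB : B.Nonempty)
    (hdisj : Disjoint A B) (hcover : A ∪ B = Finset.univ)
    (w : V → V → ℝ) (hw : ∀ i j, w i j = Real.exp (-‖I i - I j‖^2 / (2 * σ^2)))
    (g : Finset V → EuclideanSpace ℝ (Fin d) → ℝ)
    (hg : ∀ T c, g T c = (1 / (T.card : ℝ)) *
        ∑ i ∈ T, (π * σ^2) ^ (-(d:ℝ)/2) * Real.exp (-‖I i - c‖^2 / σ^2))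
    (cut : ℝ) (hcut : cut = ∑ i ∈ A, ∑ j ∈ B, w i j)
    (vol : Finset V → ℝ) (hvol : ∀ T, vol T = ∑ i ∈ T, ∑ j ∈ Finset.univ, w i j) :
    vol Finset.univ * cut / (vol A * vol B) =
      (∫ c : EuclideanSpace ℝ (Fin d), g Finset.univ c * g Finset.univ c) *
        (∫ c : EuclideanSpace ℝ (Fin d), g A c * g B c) /
      ((∫ c : EuclideanSpace ℝ (Fin d), g A c * g Finset.univ c) *
       (∫ c : EuclideanSpace ℝ (Fin d), g B c * g Finset.univ c)) := by
  set K : ℝ := (π * σ^2) ^ (-(d:ℝ)/2) with hK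
  set κ : ℝ := K^2 * (π * σ^2 / 2) ^ ((d:ℝ)/2) with hκ
  have hKpos : 0 < K := Real.rpow_pos_of_pos (by positivity) _
  have hκpos : 0 < κ := by
    have : (0:ℝ) < (π * σ^2 / 2) ^ ((d:ℝ)/2) := Real.rpow_pos_of_pos (by positivity) _
    positivity
  -- the key integral identity
  have key : ∀ S T : Finset V, ∫ c : EuclideanSpace ℝ (Fin d), g S c * g T c =
      κ * (∑ i ∈ S, ∑ j ∈ T, w i j) / ((S.card : ℝ) * (T.card : ℝ)) := by
    intro S T
    have hpt : ∀ c : EuclideanSpace ℝ (Fin d), g S c * g T c =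
        ∑ i ∈ S, ∑ j ∈ T, (1 / (S.card : ℝ)) * (1 / (T.card : ℝ)) * K^2 *
          (Real.exp (-‖I i - c‖^2 / σ^2) * Real.exp (-‖I j - c‖^2 / σ^2)) := by
      intro c
      rw [hg, hg, mul_mul_mul_comm, Finset.sum_mul_sum]
      rw [Finset.mul_sum]
      refine Finset.sum_congr rfl fun i _ => ?_
      rw [Finset.mul_sum]
      refine Finset.sum_congr rfl fun j _ => ?_
      ring
    simp_rw [hpt]
    rw [integral_finset_sum _ fun i _ => integrable_finset_sum _ fun j _ =>
      ((gauss_integrable_s8 hσ (I i) (I j)).const_mul _)]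
    have : ∀ i ∈ S, ∫ c : EuclideanSpace ℝ (Fin d),
        ∑ j ∈ T, (1 / (S.card : ℝ)) * (1 / (T.card : ℝ)) * K^2 *
          (Real.exp (-‖I i - c‖^2 / σ^2) * Real.exp (-‖I j - c‖^2 / σ^2)) =
        ∑ j ∈ T, κ * w i j / ((S.card : ℝ) * (T.card : ℝ)) := by
      intro i _
      rw [integral_finset_sum _ fun j _ => ((gauss_integrable_s8 hσ (I i) (I j)).const_mul _)]
      refine Finset.sum_congr rfl fun j _ => ?_
      rw [MeasureTheory.integral_const_mul, gauss_integral hσ (I i) (I j), hw i j, hκ]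
      field_simp
    rw [Finset.sum_congr rfl this]
    simp only [Finset.mul_sum, Finset.sum_div]
  -- positivity of the weight sums
  have hwpos : ∀ i j, 0 < w i j := fun i j => by rw [hw]; exact Real.exp_pos _
  have hsumpos : ∀ S T : Finset V, S.Nonempty → T.Nonempty →
      0 < ∑ i ∈ S, ∑ j ∈ T, w i j := fun S T hS hT =>
    Finset.sum_pos (fun i _ => Finset.sum_pos (fun j _ => hwpos i j) hT) hS
  have hU : (Finset.univ : Finset V).Nonempty := hA.mono (Finset.subset_univ A)
  have ha : (0:ℝ) < A.card := by exact_mod_cast Finset.card_pos.mpr hA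
  have hb : (0:ℝ) < B.card := by exact_mod_cast Finset.card_pos.mpr hB
  have hn : (0:ℝ) < (Finset.univ : Finset V).card := by
    exact_mod_cast Finset.card_pos.mpr hU
  rw [key, key, key, key, hcut, hvol, hvol, hvol]
  have hWav := hsumpos A Finset.univ hA hU
  have hWbv := hsumpos B Finset.univ hB hU
  set Wvv := ∑ i ∈ (Finset.univ : Finset V), ∑ j ∈ Finset.univ, w i j
  set Wab := ∑ i ∈ A, ∑ j ∈ B, w i j
  set Wav := ∑ i ∈ A, ∑ j ∈ (Finset.univ : Finset V), w i j
  set Wbv := ∑ i ∈ B, ∑ j ∈ (Finset.univ : Finset V), w i j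
  set n : ℝ := ((Finset.univ : Finset V).card : ℝ)
  set a : ℝ := ((A.card : ℕ) : ℝ)
  set b : ℝ := ((B.card : ℕ) : ℝ)
  have hC : κ * κ / (n * n * (a * b)) ≠ 0 := by positivity
  have h1 : κ * Wvv / (n * n) * (κ * Wab / (a * b)) =
      κ * κ / (n * n * (a * b)) * (Wvv * Wab) := by ring
  have h2 : κ * Wav / (a * n) * (κ * Wbv / (b * n)) =
      κ * κ / (n * n * (a * b)) * (Wav * Wbv) := by ring
  rw [h1, h2, mul_div_mul_left _ _ hC]
end
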